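/- For G = G(m,n,k) with trivial centre, x, y ∈ ℤ_m, and u invertible in ℤ_m, the containers satisfy C(x, yu) = C(x, y); moreover C(x,y) = C(x,1) if and only if y is invertible in ℤ_m. -/

import Mathlib

/-- `n = ind_m(k)`: `n` is the least positive integer with `k^n ≡ 1 (mod m)`. -/
def IsIndex (m k n : ℕ) : Prop :=
  0 < n ∧ k ^ n ≡ 1 [MOD m] ∧ ∀ d : ℕ, 0 < d → k ^ d ≡ 1 [MOD m] → n ≤ d

/-- The mu-map `μ(x,y)` of `G = G(m,n,k)`, acting on elements of `G` written in
the normal form `a^i b^j` (identified with pairs `(i,j) ∈ ℤ_m × ℤ_n`):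
`(a^i b^j) μ(x,y) = a^N` with `N ≡ x·i·k^j − y·(k^j − 1) (mod m)`. -/
def Mu (m n k : ℕ) (x y : ZMod m) : Function.End (ZMod m × ZMod n) :=
  fun p => (x * p.1 * (k : ZMod m) ^ p.2.val -
    y * ((k : ZMod m) ^ p.2.val - 1), 0)

/-- The container `C(x,y) = {μ(x, yz) : z ∈ ℤ_m}`. -/
def Container (m n k : ℕ) (x y : ZMod m) :
    Set (Function.End (ZMod m × ZMod n)) :=
  {f | ∃ z : ZMod m, f = Mu m n k x (y * z)}

lemma mu_inj (m n k : ℕ) (hm : 1 < m) (hk : 0 < k)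
    (hcop : Nat.gcd m (k - 1) = 1) (hind : IsIndex m k n)
    (x y1 y2 : ZMod m) (h : Mu m n k x y1 = Mu m n k x y2) : y1 = y2 := by
  have hn2 : 1 < n := by
    rcases Nat.lt_or_ge 1 n with h' | h'
    · exact h'
    · interval_cases n
      · exact absurd hind.1 (lt_irrefl 0)
      · exfalso
        have hkm : k ≡ 1 [MOD m] := by simpa using hind.2.1
        have hdvd : m ∣ k - 1 := (Nat.modEq_iff_dvd' hk).mp hkm.symm
        have : m ∣ 1 := hcop ▸ Nat.dvd_gcd dvd_rfl hdvd
        exact Nat.lt_irrefl 1 (lt_of_lt_of_le hm (Nat.le_of_dvd one_pos this))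
  haveI : NeZero n := ⟨(lt_trans one_pos hn2).ne'⟩
  haveI : Fact (1 < n) := ⟨hn2⟩
  have hval : (1 : ZMod n).val = 1 := ZMod.val_one n
  have hpt := congrFun h (0, 1)
  simp only [Mu, hval, pow_one, mul_zero, zero_mul, Prod.mk.injEq, zero_sub] at hpt
  have heq : y1 * ((k : ZMod m) - 1) = y2 * ((k : ZMod m) - 1) := by
    have := hpt.1
    exact neg_injective this
  have hunit : IsUnit ((k : ZMod m) - 1) := by
    have hc : ((k - 1 : ℕ) : ZMod m) = (k : ZMod m) - 1 := by
      push_cast [Nat.cast_sub hk]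
      ring
    rw [← hc]
    exact (ZMod.isUnit_iff_coprime (k - 1) m).mpr (Nat.coprime_comm.mp hcop)
  exact hunit.mul_right_cancel heq

/-- for `u` a unit of `ℤ_m`, `C(x, yu) = C(x, y)`; moreover
`C(x,y) = C(x,1)` iff `y` is a unit of `ℤ_m`. -/
theorem stmt_10 (m n k : ℕ) (hm : 0 < m) (hk : 0 < k)
    (hcop : Nat.gcd m (k - 1) = 1) (hind : IsIndex m k n)
    (x y : ZMod m) :
    (∀ u : ZMod m, IsUnit u →
        Container m n k x (y * u) = Container m n k x y) ∧
      (Container m n k x y = Container m n k x 1 ↔ IsUnit y) := by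
  constructor
  · intro u hu
    obtain ⟨v, hv⟩ := hu
    ext f
    constructor
    · rintro ⟨z, rfl⟩
      exact ⟨u * z, by rw [← hv, mul_assoc]⟩
    · rintro ⟨z, rfl⟩
      exact ⟨(v⁻¹ : Units (ZMod m)) * z, by
        rw [← hv, mul_assoc, ← mul_assoc (v : ZMod m)]
        simp⟩
  · constructor
    · intro hC
      rcases eq_or_lt_of_le (Nat.one_le_iff_ne_zero.mpr hm.ne') with h1 | h1
      · have : Subsingleton (ZMod m) := by rw [← h1]; infer_instance
        rw [Subsingleton.elim y 1]; exact isUnit_one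
      · have hmem : Mu m n k x 1 ∈ Container m n k x y := by
          rw [hC]; exact ⟨1, by rw [mul_one]⟩
        obtain ⟨z, hz⟩ := hmem
        have := mu_inj m n k h1 hk hcop hind x 1 (y * z) hz
        exact IsUnit.of_mul_eq_one (a := y) z this.symm
    · intro hy
      obtain ⟨v, hv⟩ := hy
      ext f
      constructor
      · rintro ⟨z, rfl⟩
        exact ⟨y * z, by rw [one_mul]⟩
      · rintro ⟨z, rfl⟩
        exact ⟨(v⁻¹ : Units (ZMod m)) * z, by
          rw [one_mul, ← hv, ← mul_assoc]
          simp⟩
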